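/- In null metric hypersurface data (n^{(2)} = 0), the Lie derivative of P along n is L_n P^{ab} = −2(P^{ac} n^b + P^{bc} n^a) s_c − 2 P^{ac} P^{bd} U_{cd} − n^a n^b n(ℓ^{(2)}). -/
import Mathlib


/-- In null metric hypersurface data (`n2 = 0`) with dual `(P, n)`:
`Dn a b` represents `∇̊_a n^b = s_a n^b + P^{bc} U_{ca}`,
`DP c a b` represents `∇̊_c P^{ab} = −(n^a P^{bd} + n^b P^{ad})F_{cd}
− n^a n^b (dℓ2)_c`, `s_d = n^c F_{cd}`, and `LnP` represents `L_n P^{ab}`,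
related to `∇̊` via `L_n P^{ab} = n^c ∇̊_c P^{ab} − P^{cb}∇̊_c n^a
− P^{ac}∇̊_c n^b`.  Conclusion:
`L_n P^{ab} = −2(P^{ac}n^b + P^{bc}n^a)s_c − 2P^{ac}P^{bd}U_{cd}
− n^a n^b n(ℓ2)`. -/
theorem lie_n_P {ι : Type*} [Fintype ι]
    (P U F LnP Dn : ι → ι → ℝ) (DP : ι → ι → ι → ℝ) (n s dℓ2 : ι → ℝ)
    (hPsymm : ∀ a b, P a b = P b a)
    (hUsymm : ∀ a b, U a b = U b a)
    (hs : ∀ d, s d = ∑ c, n c * F c d)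
    (hDn : ∀ a b, Dn a b = s a * n b + ∑ c, P b c * U c a)
    (hDP : ∀ c a b, DP c a b =
      -(∑ d, (n a * P b d + n b * P a d) * F c d) - n a * n b * dℓ2 c)
    (hLnP : ∀ a b, LnP a b = (∑ c, n c * DP c a b)
      - (∑ c, P c b * Dn c a) - ∑ c, P a c * Dn c b) :
    ∀ a b, LnP a b =
      -2 * ((∑ c, P a c * s c) * n b + (∑ c, P b c * s c) * n a)
      - 2 * (∑ c, ∑ d, P a c * P b d * U c d)
      - n a * n b * (∑ c, n c * dℓ2 c) := by
  intro a b
  have h1 : (∑ c, n c * DP c a b)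
      = -((∑ c, P b c * s c) * n a) - ((∑ c, P a c * s c) * n b)
        - n a * n b * (∑ c, n c * dℓ2 c) := by
    have e1 : ∀ c, n c * DP c a b
        = (∑ d, -((n a * P b d + n b * P a d) * (n c * F c d)))
          - n a * n b * (n c * dℓ2 c) := by
      intro c
      rw [hDP, mul_sub, mul_neg, Finset.mul_sum]
      rw [show (∑ d, -((n a * P b d + n b * P a d) * (n c * F c d)))
          = -∑ d, n c * ((n a * P b d + n b * P a d) * F c d) from by
        rw [← Finset.sum_neg_distrib]
        exact Finset.sum_congr rfl fun d _ => by ring]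
      ring
    simp only [e1]
    rw [Finset.sum_sub_distrib, Finset.sum_comm]
    rw [show (∑ c, n a * n b * (n c * dℓ2 c)) = n a * n b * ∑ c, n c * dℓ2 c from by
      rw [Finset.mul_sum]]
    congr 1
    have e2 : ∀ d, (∑ c, -((n a * P b d + n b * P a d) * (n c * F c d)))
        = -(n a * (P b d * s d)) - n b * (P a d * s d) := by
      intro d
      rw [hs]
      rw [show (∑ c, -((n a * P b d + n b * P a d) * (n c * F c d)))
          = ∑ c, (-(n a * (P b d * (n c * F c d))) - n b * (P a d * (n c * F c d))) from
        Finset.sum_congr rfl fun c _ => by ring]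
      rw [Finset.sum_sub_distrib, Finset.sum_neg_distrib]
      simp only [← Finset.mul_sum]
    simp only [e2]
    rw [Finset.sum_sub_distrib, Finset.sum_neg_distrib]
    simp only [← Finset.mul_sum]
    ring
  have h2 : (∑ c, P c b * Dn c a)
      = (∑ c, P b c * s c) * n a + ∑ c, ∑ d, P a c * P b d * U c d := by
    simp only [hDn, mul_add, Finset.mul_sum]
    rw [Finset.sum_add_distrib]
    congr 1
    · rw [Finset.sum_mul]
      exact Finset.sum_congr rfl fun c _ => by rw [hPsymm c b]; ring
    · rw [Finset.sum_comm]
      apply Finset.sum_congr rfl; intro c _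
      apply Finset.sum_congr rfl; intro d _
      rw [hPsymm d b]; ring
  have h3 : (∑ c, P a c * Dn c b)
      = (∑ c, P a c * s c) * n b + ∑ c, ∑ d, P a c * P b d * U c d := by
    simp only [hDn, mul_add, Finset.mul_sum]
    rw [Finset.sum_add_distrib]
    congr 1
    · rw [Finset.sum_mul]
      exact Finset.sum_congr rfl fun c _ => by ring
    · exact Finset.sum_congr rfl fun c _ => Finset.sum_congr rfl fun d _ => by
        rw [hUsymm d c]; ring
  rw [hLnP, h1, h2, h3]; ring
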